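/- Let N ∈ ℕ, L > 0, and let ((Q_n)_{n∈ℤ}, (E_n)_{n∈ℤ}) be N-periodic sequences of positive reals with Σ_{n=1}^N(Q_n+E_n) = L and Σ_{n=1}^N Q_n < L/2. Let S be the bi-infinite path encoding with local maxima at a_n and local minima at b_n, and M(x) = sup_{y≤x} S(y). Define D_n := min_{0 ≤ k ≤ N−1} Σ_{ℓ=1}^k (E_{n−ℓ} − Q_{n−ℓ}). Then for every n ∈ ℤ: b_n − a_n − D_n = M(b_n) − S(b_n). Equivalently, Q_n − D_n = M(b_n) − S(b_n). -/

import Mathlib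

noncomputable def pastMax (S : ℝ → ℝ) (x : ℝ) : ℝ := sSup (S '' Set.Iic x)

/-- `D_n = min_{0 ≤ k ≤ N-1} ∑_{ℓ=1}^k (E_{n-ℓ} - Q_{n-ℓ})`. -/
noncomputable def Dfun (N : ℕ) (Q E : ℤ → ℝ) (n : ℤ) : ℝ :=
  sInf {s : ℝ | ∃ k : ℕ, k < N ∧
    s = ∑ ℓ ∈ Finset.Icc (1:ℤ) (k:ℤ), (E (n - ℓ) - Q (n - ℓ))}

private lemma sumIccTop (f : ℤ → ℝ) (k : ℤ) (hk : 0 ≤ k) :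
    ∑ ℓ ∈ Finset.Icc (1:ℤ) (k+1), f ℓ = (∑ ℓ ∈ Finset.Icc (1:ℤ) k, f ℓ) + f (k+1) := by
  have h1 : Finset.Icc (1:ℤ) (k+1) = insert (k+1) (Finset.Icc (1:ℤ) k) := by
    ext x; simp only [Finset.mem_Icc, Finset.mem_insert]; omega
  rw [h1, Finset.sum_insert (by simp), add_comm]

private lemma sup'_const_sub (s : Finset ℕ) (hs : s.Nonempty) (C : ℝ) (g : ℕ → ℝ) :
    s.sup' hs (fun k => C - g k) = C - s.inf' hs g := by
  apply le_antisymm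
  · exact Finset.sup'_le _ _ fun k hk => by
      have := Finset.inf'_le g hk; linarith
  · obtain ⟨k, hk, hkeq⟩ := Finset.exists_mem_eq_inf' hs g
    rw [hkeq]
    exact Finset.le_sup' (fun k => C - g k) hk

theorem periodic_carrier_identity (N : ℕ) (hN : 1 ≤ N) (L : ℝ) (hL : 0 < L)
    (Q E : ℤ → ℝ) (a b : ℤ → ℝ) (S : ℝ → ℝ)
    (hQpos : ∀ n, 0 < Q n) (hEpos : ∀ n, 0 < E n)
    (hQper : ∀ n, Q (n + N) = Q n) (hEper : ∀ n, E (n + N) = E n)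
    (hsum : ∑ n ∈ Finset.Icc (1:ℤ) (N:ℤ), (Q n + E n) = L)
    (hhalf : ∑ n ∈ Finset.Icc (1:ℤ) (N:ℤ), Q n < L / 2)
    (ha1 : a 1 = 0) (hS0 : S 0 = 0)
    (hb : ∀ n, b n = a n + Q n) (ha : ∀ n, a (n + 1) = b n + E n)
    (hdown : ∀ n, ∀ x ∈ Set.Icc (a n) (b n), S x = S (a n) - (x - a n))
    (hup : ∀ n, ∀ x ∈ Set.Icc (b n) (a (n + 1)), S x = S (b n) + (x - b n)) :
    ∀ n : ℤ, b n - a n - Dfun N Q E n = pastMax S (b n) - S (b n) := by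
  have hNZ : (N:ℤ) ≠ 0 := by omega
  have hNpos : (0:ℤ) < N := by omega
  -- basic ordering
  have hab : ∀ m, a m < b m := fun m => by have := hQpos m; rw [hb m]; linarith
  have hba : ∀ m, b m < a (m+1) := fun m => by have := hEpos m; rw [ha m]; linarith
  have haa : ∀ m, a m < a (m+1) := fun m => lt_trans (hab m) (hba m)
  have hamono : StrictMono a := strictMono_int_of_lt_succ haa
  -- values at nodes
  have hSb : ∀ m, S (b m) = S (a m) - Q m := by
    intro m
    have h := hdown m (b m) ⟨le_of_lt (hab m), le_refl _⟩
    rw [h, hb m]; ring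
  have hSa' : ∀ m, S (a (m+1)) = S (b m) + E m := by
    intro m
    have h := hup m (a (m+1)) ⟨le_of_lt (hba m), le_refl _⟩
    rw [h, ha m]; ring
  have hSa : ∀ m, S (a (m+1)) = S (a m) + (E m - Q m) := by
    intro m; rw [hSa' m, hSb m]; ring
  have haQE : ∀ m, a (m+1) = a m + (Q m + E m) := fun m => by rw [ha m, hb m]; ring
  set c : ℝ := L - 2 * ∑ n ∈ Finset.Icc (1:ℤ) (N:ℤ), Q n with hc
  have hcpos : 0 < c := by rw [hc]; linarith
  -- partial sums along the lattice
  have hstepa : ∀ k : ℕ, a (1 + (k:ℤ)) = ∑ ℓ ∈ Finset.Icc (1:ℤ) (k:ℤ), (Q ℓ + E ℓ) := by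
    intro k
    induction k with
    | zero => simpa using ha1
    | succ k ih =>
      have h1 : (1:ℤ) + ((k:ℤ)+1) = (1 + (k:ℤ)) + 1 := by ring
      push_cast
      rw [h1, haQE, ih, sumIccTop _ _ (by positivity)]
      rw [show (1:ℤ) + (k:ℤ) = (k:ℤ) + 1 by ring]
  have hstepS : ∀ k : ℕ, S (a (1 + (k:ℤ))) = ∑ ℓ ∈ Finset.Icc (1:ℤ) (k:ℤ), (E ℓ - Q ℓ) := by
    intro k
    induction k with
    | zero => simpa [ha1] using hS0
    | succ k ih =>
      have h1 : (1:ℤ) + ((k:ℤ)+1) = (1 + (k:ℤ)) + 1 := by ring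
      push_cast
      rw [h1, hSa, ih, sumIccTop _ _ (by positivity)]
      ring_nf
  -- the shift by N
  have hashiftstep : ∀ m : ℤ, a (m+1+(N:ℤ)) - a (m+1) = a (m+(N:ℤ)) - a m := by
    intro m
    have e1 : m+1+(N:ℤ) = (m+(N:ℤ))+1 := by ring
    rw [e1, haQE (m+(N:ℤ)), haQE m, hQper, hEper]; ring
  have hSshiftstep : ∀ m : ℤ, S (a (m+1+(N:ℤ))) - S (a (m+1)) = S (a (m+(N:ℤ))) - S (a m) := by
    intro m
    have e1 : m+1+(N:ℤ) = (m+(N:ℤ))+1 := by ring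
    rw [e1, hSa (m+(N:ℤ)), hSa m, hQper, hEper]; ring
  have hconst : ∀ (g : ℤ → ℝ), (∀ m, g (m+1) = g m) → ∀ m, g m = g 1 := by
    intro g hg m
    have key : ∀ m : ℤ, g m = g 0 := by
      intro m
      induction m using Int.induction_on with
      | zero => rfl
      | succ k ih => rw [hg k]; exact ih
      | pred k ih =>
        have := hg (-(k:ℤ)-1)
        have e : -(k:ℤ)-1+1 = -(k:ℤ) := by ring
        rw [e] at this
        rw [← this]; exact ih
    rw [key m, key 1]
  have hashift : ∀ m : ℤ, a (m + (N:ℤ)) = a m + L := by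
    have h1 : a (1 + (N:ℤ)) - a 1 = L := by
      rw [ha1, hstepa N]; simp [hsum]
    intro m
    have := hconst (fun m => a (m+(N:ℤ)) - a m) hashiftstep m
    linarith
  have hSshift : ∀ m : ℤ, S (a (m + (N:ℤ))) = S (a m) + c := by
    have hsplit : ∑ ℓ ∈ Finset.Icc (1:ℤ) (N:ℤ), (E ℓ - Q ℓ) = c := by
      rw [hc, ← hsum, Finset.mul_sum, ← Finset.sum_sub_distrib]
      exact Finset.sum_congr rfl fun x _ => by ring
    have h1 : S (a (1 + (N:ℤ))) - S (a 1) = c := by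
      rw [ha1, hS0, hstepS N, hsplit]; ring
    intro m
    have := hconst (fun m => S (a (m+(N:ℤ))) - S (a m)) hSshiftstep m
    linarith
  -- iterates of the shift
  have hSiter : ∀ (m : ℤ) (k : ℕ), S (a (m + (k:ℤ) * N)) = S (a m) + (k:ℝ) * c := by
    intro m k
    induction k with
    | zero => simp
    | succ k ih =>
      have e : m + ((k:ℤ)+1) * N = (m + (k:ℤ)*N) + (N:ℤ) := by ring
      push_cast
      rw [e, hSshift, ih]; ring
  have haiterdown : ∀ k : ℕ, a (1 - (k:ℤ) * N) = -(k:ℝ) * L := by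
    intro k
    induction k with
    | zero => simpa using ha1
    | succ k ih =>
      have e : (1:ℤ) - ((k:ℤ)+1) * N = (1 - ((k:ℤ)+1)*N) + (N:ℤ) - N := by ring
      have := hashift (1 - ((k:ℤ)+1)*N)
      have e2 : 1 - ((k:ℤ)+1)*N + (N:ℤ) = 1 - (k:ℤ)*N := by ring
      rw [e2] at this
      push_cast
      rw [ih] at this
      linarith
  have haiterup : ∀ k : ℕ, a (1 + (k:ℤ) * N) = (k:ℝ) * L := by
    intro k
    induction k with
    | zero => simpa using ha1
    | succ k ih =>
      have e2 : 1 + ((k:ℤ)+1)*N = (1 + (k:ℤ)*N) + (N:ℤ) := by ring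
      push_cast
      rw [e2, hashift, ih]; ring
  -- covering lemma
  have hcover : ∀ y : ℝ, ∃ m : ℤ, a m ≤ y ∧ y ≤ a (m+1) := by
    intro y
    obtain ⟨k₁, hk₁⟩ := exists_nat_ge (-y / L)
    have hlow : a (1 - (k₁:ℤ) * N) ≤ y := by
      rw [haiterdown k₁]
      have : -y / L * L ≤ (k₁:ℝ) * L := by
        apply mul_le_mul_of_nonneg_right hk₁ hL.le
      rw [div_mul_cancel₀ _ hL.ne'] at this
      linarith
    obtain ⟨k₂, hk₂⟩ := exists_nat_gt (y / L)
    have hhigh : y < a (1 + (k₂:ℤ) * N) := by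
      rw [haiterup k₂]
      have : y / L * L < (k₂:ℝ) * L := by
        apply mul_lt_mul_of_pos_right hk₂ hL
      rwa [div_mul_cancel₀ _ hL.ne'] at this
    obtain ⟨m, hm, hmax⟩ := Int.exists_greatest_of_bdd
      (P := fun z => a z ≤ y)
      ⟨1 + (k₂:ℤ) * N, by
        intro z hz
        by_contra h
        push_neg at h
        have : a (1 + (k₂:ℤ)*N) ≤ a z := hamono.monotone h.le
        linarith⟩
      ⟨1 - (k₁:ℤ) * N, hlow⟩
    refine ⟨m, hm, ?_⟩
    by_contra h
    push_neg at h
    have := hmax (m+1) h.le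
    omega
  intro n
  -- the finite max
  have hTne : (Finset.Icc (n - N + 1) n).Nonempty := ⟨n, by simp [Finset.mem_Icc]; omega⟩
  set Mx := (Finset.Icc (n - (N:ℤ) + 1) n).sup' hTne (fun m => S (a m)) with hMxdef
  have hSle : ∀ m : ℤ, m ≤ n → S (a m) ≤ Mx := by
    intro m hm
    obtain ⟨k, hk⟩ : ∃ k : ℕ, (k:ℤ) = (n - m) / N := by
      refine ⟨((n - m) / N).toNat, ?_⟩
      exact Int.toNat_of_nonneg (Int.ediv_nonneg (by omega) hNpos.le)
    have hmodlt := Int.emod_lt_of_pos (n - m) hNpos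
    have hmodge := Int.emod_nonneg (n - m) hNZ
    have hdm := Int.mul_ediv_add_emod (n - m) N
    have heq : m + (k:ℤ) * N = n - (n - m) % N := by
      rw [hk]; linarith [hdm]
    have hmem : m + (k:ℤ) * N ∈ Finset.Icc (n - (N:ℤ) + 1) n := by
      rw [Finset.mem_Icc, heq]; omega
    have h1 : S (a (m + (k:ℤ)*N)) ≤ Mx := Finset.le_sup' (fun m => S (a m)) hmem
    have h2 := hSiter m k
    have : (0:ℝ) ≤ (k:ℝ) * c := by positivity
    linarith
  -- upper bound on S over Iic (b n)
  have hub : ∀ y ∈ Set.Iic (b n), S y ≤ Mx := by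
    intro y hy
    simp only [Set.mem_Iic] at hy
    obtain ⟨m, h1, h2⟩ := hcover y
    have hmn : m ≤ n := by
      by_contra h
      push_neg at h
      have : a (n+1) ≤ a m := hamono.monotone (by omega)
      have := hba n
      linarith
    by_cases hcase : y ≤ b m
    · have hval := hdown m y ⟨h1, hcase⟩
      have hle := hSle m hmn
      rw [hval]; linarith
    · push_neg at hcase
      have hval := hup m y ⟨hcase.le, h2⟩
      have hm1 : m + 1 ≤ n := by
        by_contra h
        push_neg at h
        have : m = n := by omega
        subst this
        linarith
      have hle := hSle (m+1) hm1
      rw [hSa' m] at hle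
      have : y - b m ≤ E m := by
        have := ha m; linarith
      rw [hval]; linarith
  -- the sup equals Mx
  have hMxmem : Mx ∈ S '' Set.Iic (b n) := by
    obtain ⟨m₀, hm₀mem, hm₀⟩ := Finset.exists_mem_eq_sup' hTne (fun m => S (a m))
    rw [Finset.mem_Icc] at hm₀mem
    refine ⟨a m₀, ?_, hm₀.symm⟩
    simp only [Set.mem_Iic]
    have : a m₀ ≤ a n := hamono.monotone hm₀mem.2
    linarith [hab n]
  have hsup : pastMax S (b n) = Mx := by
    unfold pastMax
    apply le_antisymm
    · apply csSup_le
      · exact ⟨Mx, hMxmem⟩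
      · rintro z ⟨y, hy, rfl⟩
        exact hub y hy
    · apply le_csSup
      · refine ⟨Mx, ?_⟩
        rintro z ⟨y, hy, rfl⟩
        exact hub y hy
      · exact hMxmem
  -- the explicit form of S (a (n - k))
  have hform : ∀ k : ℕ, S (a (n - (k:ℤ))) =
      S (a n) - ∑ ℓ ∈ Finset.Icc (1:ℤ) (k:ℤ), (E (n - ℓ) - Q (n - ℓ)) := by
    intro k
    induction k with
    | zero => simp
    | succ k ih =>
      have e1 : n - (k:ℤ) = (n - ((k:ℤ)+1)) + 1 := by ring
      have h := hSa (n - ((k:ℤ)+1))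
      rw [← e1] at h
      push_cast
      rw [sumIccTop _ _ (by positivity)]
      have e2 : n - ((k:ℤ)+1) = n - ((k:ℤ)+1) := rfl
      push_cast at ih
      linarith [h, ih]
  -- Dfun as a finite infimum
  have hRne : (Finset.range N).Nonempty := ⟨0, Finset.mem_range.mpr (by omega)⟩
  set g : ℕ → ℝ := fun k => ∑ ℓ ∈ Finset.Icc (1:ℤ) (k:ℤ), (E (n - ℓ) - Q (n - ℓ)) with hg
  have hD : Dfun N Q E n = (Finset.range N).inf' hRne g := by
    rw [Finset.inf'_eq_csInf_image]
    unfold Dfun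
    congr 1
    ext s
    simp only [Set.mem_setOf_eq, Set.mem_image, Finset.coe_range, Set.mem_Iio]
    constructor
    · rintro ⟨k, hk, rfl⟩; exact ⟨k, hk, rfl⟩
    · rintro ⟨k, hk, rfl⟩; exact ⟨k, hk, rfl⟩
  -- reindex the sup
  have hreindex : Finset.Icc (n - (N:ℤ) + 1) n =
      (Finset.range N).image (fun k : ℕ => n - (k:ℤ)) := by
    ext m
    simp only [Finset.mem_Icc, Finset.mem_image, Finset.mem_range]
    constructor
    · intro hm
      refine ⟨(n - m).toNat, ?_, ?_⟩ <;> omega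
    · rintro ⟨k, hk, rfl⟩; omega
  have hMxval : Mx = S (a n) - Dfun N Q E n := by
    rw [hMxdef, hD]
    have hne2 : ((Finset.range N).image (fun k : ℕ => n - (k:ℤ))).Nonempty := by
      rw [← hreindex]; exact hTne
    calc (Finset.Icc (n - (N:ℤ) + 1) n).sup' hTne (fun m => S (a m))
        = ((Finset.range N).image (fun k : ℕ => n - (k:ℤ))).sup' hne2 (fun m => S (a m)) :=
          Finset.sup'_congr hTne hreindex (fun x _ => rfl)
      _ = (Finset.range N).sup' hne2.of_image ((fun m => S (a m)) ∘ (fun k : ℕ => n - (k:ℤ))) :=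
          Finset.sup'_image hne2 _
      _ = (Finset.range N).sup' hRne (fun k : ℕ => S (a n) - g k) := by
          apply Finset.sup'_congr _ rfl
          intro k _
          exact hform k
      _ = S (a n) - (Finset.range N).inf' hRne g := sup'_const_sub _ hRne _ g
  rw [hsup, hMxval, hSb n, hb n]
  ring
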